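/- arXiv:2106.02538 — 2 statements merged into one kernel-verified Lean document; each statement's English description precedes it below -/
import Mathlib

section
/- Let f : [0,∞) → [0,∞) be a superadditive function. Then for all persistence diagrams X, Y, Z, the f-Prokhorov distance satisfies the triangle inequality π_f(X,Z) ≤ π_f(X,Y) + π_f(Y,Z). -/
open scoped ENNReal Classical

/-- A persistence diagram: a finite multiset of points strictly above the diagonal of `ℝ²`.
Distances in `ℝ × ℝ` are measured by the product (sup-norm, i.e. `p = ∞`) metric `dist`. -/
structure PD where
  pts : Multiset (ℝ × ℝ)
  birth_lt_death : ∀ x ∈ pts, x.1 < x.2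

/-- Orthogonal projection of a point onto the diagonal `Δ = {(t, t) : t ∈ ℝ}`. -/
noncomputable def diagProj (x : ℝ × ℝ) : ℝ × ℝ := ((x.1 + x.2) / 2, (x.1 + x.2) / 2)

/-- The distance of a matched pair: a pair of two diagonal points counts as distance `0`,
otherwise the distance in `ℝ × ℝ` is used. -/
noncomputable def pairCost (u v : ℝ × ℝ) : ℝ :=
  if u.1 = u.2 ∧ v.1 = v.2 then 0 else dist u v

/-- `P` encodes a matching, i.e. a bijection `η : X₀ ⊔ Y₀' → Y₀ ⊔ X₀'`, as the multiset of
matched pairs `(u, η u)`: its first marginal is `X₀ ⊔ Y₀'` and its second is `Y₀ ⊔ X₀'`. -/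
def IsMatching (X Y : PD) (P : Multiset ((ℝ × ℝ) × (ℝ × ℝ))) : Prop :=
  P.map Prod.fst = X.pts + Y.pts.map diagProj ∧
  P.map Prod.snd = Y.pts + X.pts.map diagProj

/-- The bottleneck profile `D_{X,Y}(t) = inf_η |{u : d(u, η u) > t}|`. -/
noncomputable def bprofile (X Y : PD) (t : ℝ) : ℝ≥0∞ :=
  ⨅ P : {P : Multiset ((ℝ × ℝ) × (ℝ × ℝ)) // IsMatching X Y P},
    ((Multiset.countP (fun uv => t < pairCost uv.1 uv.2) P.1 : ℕ) : ℝ≥0∞)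

/-- The `f`-Prokhorov distance `π_f(X,Y) = inf {t > 0 : D_{X,Y}(t) < f(t)}`
(with value `∞` if no such `t` exists). -/
noncomputable def prokhorov (f : ℝ → ℝ) (X Y : PD) : ℝ≥0∞ :=
  ⨅ t : {t : ℝ // 0 < t ∧ bprofile X Y t < ENNReal.ofReal (f t)}, ENNReal.ofReal t.1

/-! ### Auxiliary lemmas -/

lemma diagProj_diag (x : ℝ × ℝ) : (diagProj x).1 = (diagProj x).2 := rfl

lemma dist_diagProj_le (u v : ℝ × ℝ) (hv : v.1 = v.2) : dist u (diagProj u) ≤ dist u v := by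
  obtain ⟨a, b⟩ := u
  obtain ⟨c, d⟩ := v
  simp only at hv
  subst hv
  simp only [diagProj, Prod.dist_eq, Real.dist_eq]
  have h1 : |a - (a + b) / 2| = |a - b| / 2 := by
    rw [show a - (a + b) / 2 = (a - b) / 2 by ring, abs_div, abs_two]
  have h2 : |b - (a + b) / 2| = |a - b| / 2 := by
    rw [show b - (a + b) / 2 = (b - a) / 2 by ring, abs_div, abs_two, abs_sub_comm]
  rw [h1, h2, max_self]
  have h3 := abs_sub_le a c b
  have h4 := le_max_left (|a - c|) (|b - c|)
  have h5 := le_max_right (|a - c|) (|b - c|)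
  rw [abs_sub_comm c b] at h3
  linarith

/-- Relational composition of multisets of pairs with matching middle marginals. -/
lemma comp_exists {α : Type*} [DecidableEq α] :
    ∀ (A B : Multiset (α × α)), A.map Prod.snd = B.map Prod.fst →
    ∃ T : Multiset (α × α × α),
      T.map (fun t => (t.1, t.2.1)) = A ∧ T.map (fun t => (t.2.1, t.2.2)) = B := by
  intro A
  induction A using Multiset.induction with
  | empty =>
    intro B h
    refine ⟨0, by simp, ?_⟩
    simp only [Multiset.map_zero] at h
    rw [Multiset.map_eq_zero.mp h.symm]
    simp
  | cons a A ih =>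
    intro B h
    obtain ⟨u, v⟩ := a
    simp only [Multiset.map_cons] at h
    have hv : v ∈ B.map Prod.fst := by rw [← h]; exact Multiset.mem_cons_self _ _
    obtain ⟨b, hbB, hbv⟩ := Multiset.mem_map.mp hv
    have hB : b ::ₘ B.erase b = B := Multiset.cons_erase hbB
    have hmapB : B.map Prod.fst = v ::ₘ (B.erase b).map Prod.fst := by
      conv_lhs => rw [← hB]
      rw [Multiset.map_cons, hbv]
    have h' : A.map Prod.snd = (B.erase b).map Prod.fst := by
      have : v ::ₘ A.map Prod.snd = v ::ₘ (B.erase b).map Prod.fst := by rw [h, hmapB]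
      exact (Multiset.cons_inj_right v).mp this
    obtain ⟨T, hT1, hT2⟩ := ih _ h'
    refine ⟨(u, v, b.2) ::ₘ T, by simp [hT1], ?_⟩
    simp only [Multiset.map_cons, hT2]
    rw [show ((v, b.2) : α × α) = b by rw [← hbv]]
    exact hB

/-- countP of a bind, bounded termwise by indicators. -/
lemma countP_bind_le {α β : Type*} (s : Multiset α) (g : α → Multiset β)
    (p : β → Prop) (q r : α → Prop)
    (h : ∀ a ∈ s, (g a).countP p ≤ (if q a then 1 else 0) + (if r a then 1 else 0)) :
    (s.bind g).countP p ≤ s.countP q + s.countP r := by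
  induction s using Multiset.induction with
  | empty => simp
  | cons a s ih =>
    rw [Multiset.cons_bind, Multiset.countP_add, Multiset.countP_cons, Multiset.countP_cons]
    have h1 := h a (Multiset.mem_cons_self _ _)
    have h2 := ih (fun b hb => h b (Multiset.mem_cons_of_mem hb))
    split_ifs at h1 ⊢ <;> omega

lemma countP_map' {α β : Type*} (f : α → β) (s : Multiset α) (p : β → Prop) :
    (s.map f).countP p = s.countP (fun a => p (f a)) := by
  rw [Multiset.countP_map, Multiset.countP_eq_card_filter]

lemma countP_singleton' {α : Type*} (p : α → Prop) [DecidablePred p] (a : α) :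
    ({a} : Multiset α).countP p = if p a then 1 else 0 := by
  rw [show ({a} : Multiset α) = a ::ₘ 0 from rfl, Multiset.countP_cons, Multiset.countP_zero, zero_add]

lemma countP_pair {α : Type*} (p : α → Prop) [DecidablePred p] (a b : α) :
    ({a, b} : Multiset α).countP p = (if p a then 1 else 0) + (if p b then 1 else 0) := by
  rw [show ({a, b} : Multiset α) = a ::ₘ {b} from rfl, Multiset.countP_cons, countP_singleton']
  omega

/-- The re-pairing of a composed triple. -/
noncomputable def glue (tr : (ℝ × ℝ) × (ℝ × ℝ) × (ℝ × ℝ)) : Multiset ((ℝ × ℝ) × (ℝ × ℝ)) :=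
  if tr.1.1 = tr.1.2 then
    (if tr.2.2.1 = tr.2.2.2 then 0 else {(diagProj tr.2.2, tr.2.2)})
  else
    (if tr.2.2.1 = tr.2.2.2 then {(tr.1, diagProj tr.1)}
     else {(tr.1, tr.2.2), (diagProj tr.2.2, diagProj tr.1)})

lemma glue_fst (T : Multiset ((ℝ × ℝ) × (ℝ × ℝ) × (ℝ × ℝ))) :
    (T.bind glue).map Prod.fst =
      ((T.map (fun tr => tr.1)).filter (fun u : ℝ × ℝ => ¬ u.1 = u.2))
      + (((T.map (fun tr => tr.2.2)).filter (fun u : ℝ × ℝ => ¬ u.1 = u.2)).map diagProj) := by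
  induction T using Multiset.induction with
  | empty => simp
  | cons a T ih =>
    rw [Multiset.cons_bind, Multiset.map_add, ih]
    by_cases hu : a.1.1 = a.1.2 <;> by_cases hw : a.2.2.1 = a.2.2.2 <;>
      simp [glue, hu, hw, Multiset.filter_singleton, ← Multiset.singleton_add] <;> abel

lemma glue_snd (T : Multiset ((ℝ × ℝ) × (ℝ × ℝ) × (ℝ × ℝ))) :
    (T.bind glue).map Prod.snd =
      ((T.map (fun tr => tr.2.2)).filter (fun u : ℝ × ℝ => ¬ u.1 = u.2))
      + (((T.map (fun tr => tr.1)).filter (fun u : ℝ × ℝ => ¬ u.1 = u.2)).map diagProj) := by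
  induction T using Multiset.induction with
  | empty => simp
  | cons a T ih =>
    rw [Multiset.cons_bind, Multiset.map_add, ih]
    by_cases hu : a.1.1 = a.1.2 <;> by_cases hw : a.2.2.1 = a.2.2.2 <;>
      simp [glue, hu, hw, Multiset.filter_singleton, ← Multiset.singleton_add] <;> abel

lemma ind_le {s t c A B : ℝ} (himp : s + t < c → s < A ∨ t < B) :
    (if s + t < c then (1:ℕ) else 0) ≤ (if s < A then (1:ℕ) else 0) + (if t < B then 1 else 0) := by
  by_cases h : s + t < c
  · rcases himp h with h' | h' <;> simp [h, h']
  · simp [h]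

lemma glue_count (s t : ℝ) (hs : 0 ≤ s) (ht : 0 ≤ t) (tr : (ℝ × ℝ) × (ℝ × ℝ) × (ℝ × ℝ)) :
    (glue tr).countP (fun uv => s + t < pairCost uv.1 uv.2) ≤
      (if s < pairCost tr.1 tr.2.1 then 1 else 0)
      + (if t < pairCost tr.2.1 tr.2.2 then 1 else 0) := by
  obtain ⟨u, v, w⟩ := tr
  by_cases hu : u.1 = u.2 <;> by_cases hw : w.1 = w.2
  · simp [glue, hu, hw]
  · -- u diagonal, w not diagonal : glue = {(diagProj w, w)}
    have hcount : (glue (u, v, w)).countP (fun uv => s + t < pairCost uv.1 uv.2)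
        = if s + t < pairCost (diagProj w) w then 1 else 0 := by
      simp [glue, hu, hw, countP_singleton']
    rw [hcount]
    refine ind_le fun hlt => ?_
    have hc : pairCost (diagProj w) w = dist w (diagProj w) := by
      simp [pairCost, hw, dist_comm]
    rw [hc] at hlt
    have hcvw : pairCost v w = dist v w := by simp [pairCost, hw]
    by_cases hv : v.1 = v.2
    · right
      have h1 : dist w (diagProj w) ≤ dist w v := dist_diagProj_le w v hv
      rw [hcvw, dist_comm]
      linarith
    · have h1 : dist w (diagProj w) ≤ dist w u := dist_diagProj_le w u hu
      have h2 : dist u w ≤ dist u v + dist v w := dist_triangle u v w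
      have hcuv : pairCost u v = dist u v := by simp [pairCost, hv]
      rw [dist_comm w u] at h1
      rw [hcuv, hcvw]
      by_contra hcon
      push_neg at hcon
      linarith [hcon.1, hcon.2]
  · -- u not diagonal, w diagonal : glue = {(u, diagProj u)}
    have hcount : (glue (u, v, w)).countP (fun uv => s + t < pairCost uv.1 uv.2)
        = if s + t < pairCost u (diagProj u) then 1 else 0 := by
      simp [glue, hu, hw, countP_singleton']
    rw [hcount]
    refine ind_le fun hlt => ?_
    have hc : pairCost u (diagProj u) = dist u (diagProj u) := by
      simp [pairCost, hu]
    rw [hc] at hlt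
    have hcuv : pairCost u v = dist u v := by simp [pairCost, hu]
    by_cases hv : v.1 = v.2
    · left
      have h1 : dist u (diagProj u) ≤ dist u v := dist_diagProj_le u v hv
      rw [hcuv]
      linarith
    · have h1 : dist u (diagProj u) ≤ dist u w := dist_diagProj_le u w hw
      have h2 : dist u w ≤ dist u v + dist v w := dist_triangle u v w
      have hcvw : pairCost v w = dist v w := by simp [pairCost, hv]
      rw [hcuv, hcvw]
      by_contra hcon
      push_neg at hcon
      linarith [hcon.1, hcon.2]
  · -- both not diagonal : glue = {(u, w), (diagProj w, diagProj u)}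
    have hzero : pairCost (diagProj w) (diagProj u) = 0 := by
      simp [pairCost, diagProj_diag]
    have h0 : ¬ (s + t < pairCost (diagProj w) (diagProj u)) := by
      rw [hzero]; push_neg; linarith
    have hcount : (glue (u, v, w)).countP (fun uv => s + t < pairCost uv.1 uv.2)
        = if s + t < pairCost u w then 1 else 0 := by
      simp only [glue, if_neg hu, if_neg hw]
      rw [show ({((u:ℝ×ℝ), w), (diagProj w, diagProj u)} : Multiset ((ℝ×ℝ)×(ℝ×ℝ)))
            = (u, w) ::ₘ {(diagProj w, diagProj u)} from rfl,
          Multiset.countP_cons, countP_singleton']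
      simp [h0]
    rw [hcount]
    refine ind_le fun hlt => ?_
    have hc : pairCost u w = dist u w := by simp [pairCost, hu]
    rw [hc] at hlt
    have hcuv : pairCost u v = dist u v := by simp [pairCost, hu]
    have hcvw : pairCost v w = dist v w := by simp [pairCost, hw]
    have h2 : dist u w ≤ dist u v + dist v w := dist_triangle u v w
    rw [hcuv, hcvw]
    by_contra hcon
    push_neg at hcon
    linarith [hcon.1, hcon.2]

lemma bprofile_triangle (X Y Z : PD) (s t : ℝ) (hs : 0 ≤ s) (ht : 0 ≤ t) :
    bprofile X Z (s + t) ≤ bprofile X Y s + bprofile Y Z t := by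
  rw [bprofile, bprofile, bprofile, ENNReal.iInf_add]
  refine le_iInf fun P => ?_
  rw [ENNReal.add_iInf]
  refine le_iInf fun Q => ?_
  obtain ⟨P, hP⟩ := P
  obtain ⟨Q, hQ⟩ := Q
  -- pad the two matchings so that the middle marginals agree
  set P' : Multiset ((ℝ × ℝ) × (ℝ × ℝ)) :=
    P + Z.pts.map (fun z => (diagProj z, diagProj z)) with hP'def
  set Q' : Multiset ((ℝ × ℝ) × (ℝ × ℝ)) :=
    Q + X.pts.map (fun x => (diagProj x, diagProj x)) with hQ'def
  have hP'fst : P'.map Prod.fst = X.pts + Y.pts.map diagProj + Z.pts.map diagProj := by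
    rw [hP'def, Multiset.map_add, hP.1, Multiset.map_map]
    rfl
  have hP'snd : P'.map Prod.snd = Y.pts + X.pts.map diagProj + Z.pts.map diagProj := by
    rw [hP'def, Multiset.map_add, hP.2, Multiset.map_map]
    rfl
  have hQ'fst : Q'.map Prod.fst = Y.pts + Z.pts.map diagProj + X.pts.map diagProj := by
    rw [hQ'def, Multiset.map_add, hQ.1, Multiset.map_map]
    rfl
  have hQ'snd : Q'.map Prod.snd = Z.pts + Y.pts.map diagProj + X.pts.map diagProj := by
    rw [hQ'def, Multiset.map_add, hQ.2, Multiset.map_map]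
    rfl
  have hmid : P'.map Prod.snd = Q'.map Prod.fst := by
    rw [hP'snd, hQ'fst, add_right_comm]
  obtain ⟨T, hT1, hT2⟩ := comp_exists P' Q' hmid
  set M : Multiset ((ℝ × ℝ) × (ℝ × ℝ)) := T.bind glue with hMdef
  have hTfst : T.map (fun tr => tr.1) = P'.map Prod.fst := by
    rw [← hT1, Multiset.map_map]; rfl
  have hTlast : T.map (fun tr => tr.2.2) = Q'.map Prod.snd := by
    rw [← hT2, Multiset.map_map]; rfl
  -- filtering the non-diagonal points
  have hfilX : ∀ (W : PD), W.pts.filter (fun u : ℝ × ℝ => ¬ u.1 = u.2) = W.pts := by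
    intro W
    exact Multiset.filter_eq_self.mpr fun a ha => ne_of_lt (W.birth_lt_death a ha)
  have hfilD : ∀ (s : Multiset (ℝ × ℝ)),
      (s.map diagProj).filter (fun u : ℝ × ℝ => ¬ u.1 = u.2) = 0 := by
    intro s
    refine Multiset.filter_eq_nil.mpr fun a ha => ?_
    obtain ⟨b, _, rfl⟩ := Multiset.mem_map.mp ha
    simp [diagProj_diag]
  have hM : IsMatching X Z M := by
    constructor
    · rw [hMdef, glue_fst, hTfst, hTlast, hP'fst, hQ'snd]
      simp [Multiset.filter_add, hfilX, hfilD]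
    · rw [hMdef, glue_snd, hTfst, hTlast, hP'fst, hQ'snd]
      simp [Multiset.filter_add, hfilX, hfilD]
  -- the count bound
  have hcnt : M.countP (fun uv => s + t < pairCost uv.1 uv.2) ≤
      P.countP (fun uv => s < pairCost uv.1 uv.2) +
      Q.countP (fun uv => t < pairCost uv.1 uv.2) := by
    have h1 : M.countP (fun uv => s + t < pairCost uv.1 uv.2) ≤
        T.countP (fun tr => s < pairCost tr.1 tr.2.1) +
        T.countP (fun tr => t < pairCost tr.2.1 tr.2.2) :=
      countP_bind_le T glue _ _ _ (fun a _ => glue_count s t hs ht a)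
    have h2 : T.countP (fun tr => s < pairCost tr.1 tr.2.1) =
        P'.countP (fun uv => s < pairCost uv.1 uv.2) := by
      rw [← hT1, countP_map']
    have h3 : T.countP (fun tr => t < pairCost tr.2.1 tr.2.2) =
        Q'.countP (fun uv => t < pairCost uv.1 uv.2) := by
      rw [← hT2, countP_map']
    have h4 : P'.countP (fun uv => s < pairCost uv.1 uv.2) =
        P.countP (fun uv => s < pairCost uv.1 uv.2) := by
      rw [hP'def, Multiset.countP_add]
      have : (Z.pts.map (fun z => (diagProj z, diagProj z))).countP
          (fun uv => s < pairCost uv.1 uv.2) = 0 := by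
        refine Multiset.countP_eq_zero.mpr fun a ha => ?_
        obtain ⟨b, _, rfl⟩ := Multiset.mem_map.mp ha
        have : pairCost (diagProj b) (diagProj b) = 0 := by
          simp [pairCost, diagProj_diag]
        rw [this]
        linarith
      omega
    have h5 : Q'.countP (fun uv => t < pairCost uv.1 uv.2) =
        Q.countP (fun uv => t < pairCost uv.1 uv.2) := by
      rw [hQ'def, Multiset.countP_add]
      have : (X.pts.map (fun x => (diagProj x, diagProj x))).countP
          (fun uv => t < pairCost uv.1 uv.2) = 0 := by
        refine Multiset.countP_eq_zero.mpr fun a ha => ?_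
        obtain ⟨b, _, rfl⟩ := Multiset.mem_map.mp ha
        have : pairCost (diagProj b) (diagProj b) = 0 := by
          simp [pairCost, diagProj_diag]
        rw [this]
        linarith
      omega
    omega
  refine le_trans (iInf_le _ ⟨M, hM⟩) ?_
  rw [← Nat.cast_add]
  exact Nat.cast_le.mpr hcnt

/-- The triangle inequality for the `f`-Prokhorov distance, for any superadditive
`f : [0,∞) → [0,∞)`. -/
theorem prokhorov_triangle (f : ℝ → ℝ)
    (hf_nonneg : ∀ t, 0 ≤ t → 0 ≤ f t)
    (hf_superadd : ∀ s t, 0 ≤ s → 0 ≤ t → f s + f t ≤ f (s + t))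
    (X Y Z : PD) :
    prokhorov f X Z ≤ prokhorov f X Y + prokhorov f Y Z := by
  rw [prokhorov, prokhorov, prokhorov, ENNReal.iInf_add]
  refine le_iInf fun a => ?_
  rw [ENNReal.add_iInf]
  refine le_iInf fun b => ?_
  obtain ⟨s, hs, hsb⟩ := a
  obtain ⟨t, ht, htb⟩ := b
  have hst : (0:ℝ) < s + t := by linarith
  have hb : bprofile X Z (s + t) < ENNReal.ofReal (f (s + t)) := by
    calc bprofile X Z (s + t) ≤ bprofile X Y s + bprofile Y Z t :=
          bprofile_triangle X Y Z s t hs.le ht.le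
      _ < ENNReal.ofReal (f s) + ENNReal.ofReal (f t) := ENNReal.add_lt_add hsb htb
      _ = ENNReal.ofReal (f s + f t) :=
          (ENNReal.ofReal_add (hf_nonneg s hs.le) (hf_nonneg t ht.le)).symm
      _ ≤ ENNReal.ofReal (f (s + t)) :=
          ENNReal.ofReal_le_ofReal (hf_superadd s t hs.le ht.le)
  refine le_trans (iInf_le _ ⟨s + t, hst, hb⟩) ?_
  rw [ENNReal.ofReal_add hs.le ht.le]
end

section
/- Let p ≥ 1 and q > 0. The identity map from persistence diagrams with the p-Wasserstein distance to persistence diagrams with the distance π_q is continuous: for every ε > 0 there exists δ > 0 such that W_p(X,Y) < δ implies π_q(X,Y) < ε for all persistence diagrams X, Y. -/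
open scoped ENNReal Classical

/-- The `p`-Wasserstein distance `W_p(X,Y) = inf_η (Σ_u d(u, η u)^p)^(1/p)`. -/
noncomputable def wassersteinDist (p : ℝ) (X Y : PD) : ℝ :=
  sInf {r : ℝ | ∃ P, IsMatching X Y P ∧
    r = ((P.map fun uv => pairCost uv.1 uv.2 ^ p).sum) ^ (1 / p)}

lemma pairCost_nonneg (u v : ℝ × ℝ) : 0 ≤ pairCost u v := by
  unfold pairCost; split <;> [rfl; exact dist_nonneg]

lemma exists_matching (X Y : PD) :
    IsMatching X Y (X.pts.map (fun x => (x, diagProj x)) + Y.pts.map (fun y => (diagProj y, y))) := by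
  constructor <;>
    simp [Multiset.map_map, Function.comp, add_comm]

lemma markov {α : Type*} (P : Multiset α) (f : α → ℝ) (pred : α → Prop)
    [DecidablePred pred] (c : ℝ) (hc : 0 ≤ c)
    (hf : ∀ a ∈ P, 0 ≤ f a) (h : ∀ a ∈ P, pred a → c ≤ f a) :
    ((P.countP pred : ℕ) : ℝ) * c ≤ (P.map f).sum := by
  induction P using Multiset.induction_on with
  | empty => simp
  | cons a s ih =>
    have hf' : ∀ x ∈ s, 0 ≤ f x := fun x hx => hf x (Multiset.mem_cons_of_mem hx)
    have h' : ∀ x ∈ s, pred x → c ≤ f x := fun x hx => h x (Multiset.mem_cons_of_mem hx)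
    have ihs := ih hf' h'
    rw [Multiset.countP_cons, Multiset.map_cons, Multiset.sum_cons]
    by_cases hpa : pred a
    · simp only [hpa, if_true]
      push_cast
      have := h a (Multiset.mem_cons_self a s) hpa
      nlinarith
    · simp only [hpa, if_false]
      have := hf a (Multiset.mem_cons_self a s)
      push_cast
      linarith

/-- For `p ≥ 1` and `q > 0`, the identity map from persistence diagrams with the
`p`-Wasserstein distance to persistence diagrams with `π_q = π_{t ↦ t^q}` is (uniformly)
continuous: for every `ε > 0` there is `δ > 0` such that `W_p(X,Y) < δ` implies
`π_q(X,Y) < ε`. -/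
theorem id_wasserstein_to_prokhorov_continuous (p q : ℝ) (hp : 1 ≤ p) (hq : 0 < q) :
    ∀ ε : ℝ, 0 < ε → ∃ δ : ℝ, 0 < δ ∧ ∀ X Y : PD,
      wassersteinDist p X Y < δ →
      prokhorov (fun t => t ^ q) X Y < ENNReal.ofReal ε := by
  intro ε hε
  set t : ℝ := ε / 2 with ht_def
  have ht : 0 < t := by positivity
  have hp0 : (0:ℝ) < p := lt_of_lt_of_le one_pos hp
  refine ⟨t ^ ((p + q) / p), Real.rpow_pos_of_pos ht _, ?_⟩
  intro X Y hW
  set δ : ℝ := t ^ ((p + q) / p) with hδ_def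
  -- the set defining wassersteinDist is nonempty and bounded below
  set S : Set ℝ := {r : ℝ | ∃ P, IsMatching X Y P ∧
    r = ((P.map fun uv => pairCost uv.1 uv.2 ^ p).sum) ^ (1 / p)} with hS_def
  have hSne : S.Nonempty := ⟨_, _, exists_matching X Y, rfl⟩
  have hSnonneg : ∀ r ∈ S, 0 ≤ r := by
    rintro r ⟨P, hP, rfl⟩
    apply Real.rpow_nonneg
    apply Multiset.sum_nonneg
    intro x hx
    obtain ⟨uv, _, rfl⟩ := Multiset.mem_map.1 hx
    exact Real.rpow_nonneg (pairCost_nonneg _ _) _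
  have hSbdd : BddBelow S := ⟨0, hSnonneg⟩
  have hW' : sInf S < δ := hW
  obtain ⟨r, hrS, hrδ⟩ := (csInf_lt_iff hSbdd hSne).1 hW'
  obtain ⟨P, hP, rfl⟩ := hrS
  set s : ℝ := (P.map fun uv => pairCost uv.1 uv.2 ^ p).sum with hs_def
  have hs0 : 0 ≤ s := by
    apply Multiset.sum_nonneg
    intro x hx
    obtain ⟨uv, _, rfl⟩ := Multiset.mem_map.1 hx
    exact Real.rpow_nonneg (pairCost_nonneg _ _) _
  have hpne : p ≠ 0 := ne_of_gt hp0
  -- s < δ ^ p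
  have hsum_lt : s < δ ^ p := by
    have h1 : (s ^ (1/p)) ^ p < δ ^ p :=
      Real.rpow_lt_rpow (Real.rpow_nonneg hs0 _) hrδ hp0
    rw [← Real.rpow_mul hs0, one_div, inv_mul_cancel₀ hpne, Real.rpow_one] at h1
    exact h1
  have hδp : δ ^ p = t ^ p * t ^ q := by
    rw [hδ_def, ← Real.rpow_mul ht.le, div_mul_cancel₀ _ hpne,
      Real.rpow_add ht]
  -- Markov
  have hmark : ((P.countP (fun uv => t < pairCost uv.1 uv.2) : ℕ) : ℝ) * t ^ p ≤ s := by
    apply markov P (fun uv => pairCost uv.1 uv.2 ^ p) _ _ (Real.rpow_nonneg ht.le p)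
    · intro a _; exact Real.rpow_nonneg (pairCost_nonneg _ _) _
    · intro a _ ha
      exact Real.rpow_le_rpow ht.le ha.le hp0.le
  have htp : (0:ℝ) < t ^ p := Real.rpow_pos_of_pos ht p
  have hcount : ((P.countP (fun uv => t < pairCost uv.1 uv.2) : ℕ) : ℝ) < t ^ q := by
    have := lt_of_le_of_lt hmark hsum_lt
    rw [hδp] at this
    nlinarith
  have hbp : bprofile X Y t < ENNReal.ofReal (t ^ q) := by
    refine lt_of_le_of_lt (iInf_le _ ⟨P, hP⟩) ?_
    rw [← ENNReal.ofReal_natCast]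
    exact ENNReal.ofReal_lt_ofReal_iff (Real.rpow_pos_of_pos ht q) |>.2 hcount
  calc prokhorov (fun t => t ^ q) X Y ≤ ENNReal.ofReal t := iInf_le _ (⟨t, ht, hbp⟩ : {t : ℝ // 0 < t ∧ bprofile X Y t < ENNReal.ofReal (t ^ q)})
    _ < ENNReal.ofReal ε := (ENNReal.ofReal_lt_ofReal_iff hε).2 (by linarith)
end
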